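/- Suppose A : [0,T] → S₂(ℝ) (symmetric 2×2 real matrices) is C¹ and satisfies A'(t) = (1/η)·A(t)·M·A(t) - (γ/2)·Σ with A(T) = diag(K, 0), where M is the rank-one matrix with entries M₁₁ = 1, M₁₂ = M₂₁ = k, M₂₂ = k², and Σ is symmetric positive semidefinite. Then A(t) is positive semidefinite for all t ∈ [0,T]. -/

import Mathlib

open Real Set Matrix

lemma quad_pd (a b c x0 x1 : ℝ) (ha : 0 < a) (hd : b^2 < a*c) (hx : ¬(x0 = 0 ∧ x1 = 0)) :
    0 < a*x0^2 + 2*b*x0*x1 + c*x1^2 := by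
  rcases eq_or_ne x1 0 with h1 | h1
  · subst h1
    have h0 : x0 ≠ 0 := fun h => hx ⟨h, rfl⟩
    have : 0 < x0^2 := by positivity
    nlinarith
  · have h2 : 0 < x1^2 := by positivity
    nlinarith [sq_nonneg (a*x0 + b*x1)]

lemma zero_of_quad_nonneg (a r : ℝ) (ha : 0 ≤ a) (h : ∀ s : ℝ, 0 ≤ a*s^2 + 2*s*r) : r = 0 := by
  have h1 := h (-r/(a+1))
  have ha1 : (0:ℝ) < a + 1 := by linarith
  have : r^2 ≤ 0 := by
    have h2 : (-r/(a+1))^2 = r^2/(a+1)^2 := by rw [div_pow, neg_pow]; ring_nf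
    rw [h2] at h1
    have h3 : 0 ≤ a * (r^2/(a+1)^2) + 2*(-r/(a+1))*r := h1
    have h4 : a * (r^2/(a+1)^2) + 2*(-r/(a+1))*r = (a*r^2 - 2*r^2*(a+1))/(a+1)^2 := by
      field_simp; ring
    rw [h4] at h3
    have h5 : 0 ≤ a*r^2 - 2*r^2*(a+1) := by
      have := (div_nonneg_iff).mp h3
      rcases this with ⟨h6,_⟩|⟨_,h7⟩
      · exact h6
      · nlinarith [sq_nonneg (a+1)]
    nlinarith [sq_nonneg r]
  nlinarith [sq_nonneg r]

set_option maxHeartbeats 2000000 in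
/-- A C¹ solution of the matrix Riccati equation `A' = (1/η)AMA - (γ/2)Σ`,
`A(T) = diag(K,0)`, with `M = (1,k)ᵀ(1,k)` and `Σ ⪰ 0`, stays positive semidefinite
on `[0,T]`. -/
theorem stmt_7 (T η γ k K σ ν ρ : ℝ) (hT : 0 < T) (hη : 0 < η) (hγ : 0 ≤ γ)
    (hk : 0 ≤ k) (hK : 0 ≤ K) (hσ : 0 < σ) (hν : 0 ≤ ν) (hρ : ρ ∈ Icc (-1 : ℝ) 1)
    (M Sig : Matrix (Fin 2) (Fin 2) ℝ)
    (hM : M = !![1, k; k, k ^ 2])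
    (hSig : Sig = !![σ ^ 2, ρ * σ * ν; ρ * σ * ν, ν ^ 2])
    (hSigpsd : Sig.PosSemidef)
    (A : ℝ → Matrix (Fin 2) (Fin 2) ℝ)
    (hAsymm : ∀ t ∈ Icc 0 T, (A t).IsSymm)
    (hA : ∀ t ∈ Icc 0 T, ∀ i j, HasDerivAt (fun s => A s i j)
      (((1 / η) • (A t * M * A t) - (γ / 2) • Sig) i j) t)
    (hAT : A T = !![K, 0; 0, 0]) :
    ∀ t ∈ Icc 0 T, (A t).PosSemidef := by
  have hsym : ∀ t ∈ Icc 0 T, A t 1 0 = A t 0 1 := fun t ht => (hAsymm t ht).apply 0 1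
  -- nonnegativity of the Σ quadratic form
  have hSigq : ∀ v0 v1 : ℝ, 0 ≤ σ^2*v0^2 + 2*(ρ*σ*ν)*v0*v1 + ν^2*v1^2 := by
    intro v0 v1
    nlinarith [mul_nonneg (by linarith [hρ.1] : (0:ℝ) ≤ 1+ρ) (sq_nonneg (σ*v0+ν*v1)),
      mul_nonneg (by linarith [hρ.2] : (0:ℝ) ≤ 1-ρ) (sq_nonneg (σ*v0-ν*v1))]
  -- abbreviations for the perturbed entries
  -- key invariance claim
  have key : ∀ ε : ℝ, 0 < ε → ε * Real.exp T * (1+k^2) < η →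
      ∀ t ∈ Icc 0 T, 0 < A t 0 0 + ε * Real.exp (T - t) ∧
        (A t 0 1)^2 < (A t 0 0 + ε * Real.exp (T - t)) * (A t 1 1 + ε * Real.exp (T - t)) := by
    intro ε hε hεη
    by_contra hcon
    push_neg at hcon
    obtain ⟨t₀, ht₀, hbad⟩ := hcon
    set S : Set ℝ := {t | t ∈ Icc 0 T ∧ (A t 0 0 + ε * Real.exp (T - t) ≤ 0 ∨
        (A t 0 0 + ε * Real.exp (T - t)) * (A t 1 1 + ε * Real.exp (T - t)) ≤ (A t 0 1)^2)}
      with hSdef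
    have ht₀S : t₀ ∈ S := by
      refine ⟨ht₀, ?_⟩
      by_cases h : 0 < A t₀ 0 0 + ε * Real.exp (T - t₀)
      · exact Or.inr (hbad h)
      · exact Or.inl (le_of_not_gt h)
    -- continuity of entries at points of Icc
    have hcont : ∀ i j, ∀ t ∈ Icc 0 T, ContinuousAt (fun s => A s i j) t :=
      fun i j t ht => (hA t ht i j).continuousAt
    have hexpc : Continuous (fun s : ℝ => ε * Real.exp (T - s)) := by continuity
    have hf1c : ∀ t ∈ Icc 0 T, ContinuousAt (fun s => A s 0 0 + ε * Real.exp (T - s)) t :=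
      fun t ht => (hcont 0 0 t ht).add hexpc.continuousAt
    have hf2c : ∀ t ∈ Icc 0 T, ContinuousAt (fun s =>
        (A s 0 0 + ε * Real.exp (T - s)) * (A s 1 1 + ε * Real.exp (T - s)) - (A s 0 1)^2) t :=
      fun t ht => (((hcont 0 0 t ht).add hexpc.continuousAt).mul
        ((hcont 1 1 t ht).add hexpc.continuousAt)).sub ((hcont 0 1 t ht).pow 2)
    -- S is closed
    have hSclosed : IsClosed S := by
      rw [← isOpen_compl_iff]
      rw [isOpen_iff_mem_nhds]
      intro t ht
      by_cases htI : t ∈ Icc (0:ℝ) T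
      · have ht' : ¬ (A t 0 0 + ε * Real.exp (T - t) ≤ 0 ∨
            (A t 0 0 + ε * Real.exp (T - t)) * (A t 1 1 + ε * Real.exp (T - t)) ≤ (A t 0 1)^2) := by
          intro hc; exact ht ⟨htI, hc⟩
        push_neg at ht'
        obtain ⟨h1, h2⟩ := ht'
        have e1 : ∀ᶠ s in nhds t, 0 < A s 0 0 + ε * Real.exp (T - s) :=
          (hf1c t htI).eventually (eventually_gt_nhds h1)
        have h2' : (0:ℝ) < (A t 0 0 + ε * Real.exp (T - t)) *
            (A t 1 1 + ε * Real.exp (T - t)) - (A t 0 1)^2 := by linarith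
        have e2 : ∀ᶠ s in nhds t, 0 < (A s 0 0 + ε * Real.exp (T - s)) *
            (A s 1 1 + ε * Real.exp (T - s)) - (A s 0 1)^2 :=
          (hf2c t htI).eventually (eventually_gt_nhds h2')
        filter_upwards [e1, e2] with s hs1 hs2
        intro hsS
        rcases hsS.2 with h | h
        · linarith
        · linarith
      · have : (Icc (0:ℝ) T)ᶜ ∈ nhds t := (isClosed_Icc.isOpen_compl).mem_nhds htI
        filter_upwards [this] with s hs
        intro hsS
        exact hs hsS.1
    have hScomp : IsCompact S := isCompact_Icc.of_isClosed_subset hSclosed (fun t ht => ht.1)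
    obtain ⟨t₁, ht₁S, ht₁gr⟩ := hScomp.exists_isGreatest ⟨t₀, ht₀S⟩
    have ht₁I : t₁ ∈ Icc 0 T := ht₁S.1
    -- t₁ < T
    have ht₁T : t₁ < T := by
      rcases lt_or_eq_of_le ht₁I.2 with h | h
      · exact h
      · exfalso
        have hTentries : A T 0 0 = K ∧ A T 0 1 = 0 ∧ A T 1 1 = 0 := by
          rw [hAT]; refine ⟨rfl, rfl, rfl⟩
        have hexp0 : Real.exp (T - T) = 1 := by rw [sub_self, Real.exp_zero]
        rcases ht₁S.2 with hc | hc <;> rw [h] at hc <;>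
          rw [hTentries.1] at hc <;> rw [hexp0] at hc
        · linarith
        · rw [hTentries.2.1, hTentries.2.2] at hc
          nlinarith
    -- PD on (t₁, T]
    have hPD : ∀ t ∈ Ioc t₁ T, 0 < A t 0 0 + ε * Real.exp (T - t) ∧
        (A t 0 1)^2 < (A t 0 0 + ε * Real.exp (T - t)) * (A t 1 1 + ε * Real.exp (T - t)) := by
      intro t ht
      have htI : t ∈ Icc 0 T := ⟨le_trans ht₁I.1 (le_of_lt ht.1), ht.2⟩
      have htnS : t ∉ S := fun hts => absurd (ht₁gr hts) (not_le.mpr ht.1)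
      have : ¬ (A t 0 0 + ε * Real.exp (T - t) ≤ 0 ∨
          (A t 0 0 + ε * Real.exp (T - t)) * (A t 1 1 + ε * Real.exp (T - t)) ≤ (A t 0 1)^2) :=
        fun hc => htnS ⟨htI, hc⟩
      push_neg at this
      exact this
    -- perturbed quadratic form
    set Q : ℝ → ℝ → ℝ → ℝ := fun t x0 x1 =>
      (A t 0 0 + ε * Real.exp (T - t)) * x0^2 + 2 * (A t 0 1) * x0 * x1 +
        (A t 1 1 + ε * Real.exp (T - t)) * x1^2 with hQdef
    have hQpos : ∀ t ∈ Ioc t₁ T, ∀ x0 x1 : ℝ, ¬(x0 = 0 ∧ x1 = 0) → 0 < Q t x0 x1 := by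
      intro t ht x0 x1 hx
      obtain ⟨h1, h2⟩ := hPD t ht
      exact quad_pd _ _ _ _ _ h1 h2 hx
    have hQnonneg : ∀ t ∈ Ioc t₁ T, ∀ x0 x1 : ℝ, 0 ≤ Q t x0 x1 := by
      intro t ht x0 x1
      by_cases hx : x0 = 0 ∧ x1 = 0
      · rw [hQdef]; simp [hx.1, hx.2]
      · exact le_of_lt (hQpos t ht x0 x1 hx)
    -- PSD at t₁ by continuity from the right
    have hQcontAt : ∀ x0 x1 : ℝ, ContinuousAt (fun t => Q t x0 x1) t₁ := by
      intro x0 x1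
      simp only [hQdef]
      exact (((hf1c t₁ ht₁I).mul continuousAt_const).add
        (((continuousAt_const.mul (hcont 0 1 t₁ ht₁I)).mul continuousAt_const).mul
          continuousAt_const)).add
        (((hcont 1 1 t₁ ht₁I).add hexpc.continuousAt).mul continuousAt_const)
    have hQpsd : ∀ x0 x1 : ℝ, 0 ≤ Q t₁ x0 x1 := by
      intro x0 x1
      have hne : (nhdsWithin t₁ (Ioi t₁)).NeBot := nhdsGT_neBot t₁
      have htend : Filter.Tendsto (fun t => Q t x0 x1) (nhdsWithin t₁ (Ioi t₁)) (nhds (Q t₁ x0 x1)) :=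
        ((hQcontAt x0 x1).tendsto).mono_left nhdsWithin_le_nhds
      refine ge_of_tendsto htend ?_
      filter_upwards [Ioc_mem_nhdsGT ht₁T] with t ht
      exact hQnonneg t ht x0 x1
    -- a null vector at t₁
    obtain ⟨v0, v1, hv, hQv0⟩ : ∃ v0 v1 : ℝ, ¬(v0 = 0 ∧ v1 = 0) ∧ Q t₁ v0 v1 ≤ 0 := by
      rcases ht₁S.2 with hc | hc
      · exact ⟨1, 0, by simp, by rw [hQdef]; simp; nlinarith⟩
      · by_cases ha : A t₁ 0 0 + ε * Real.exp (T - t₁) ≤ 0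
        · exact ⟨1, 0, by simp, by rw [hQdef]; simp; nlinarith⟩
        · push_neg at ha
          refine ⟨A t₁ 0 1, -(A t₁ 0 0 + ε * Real.exp (T - t₁)), ?_, ?_⟩
          · intro h; exact absurd h.2 (by intro h2; nlinarith)
          · rw [hQdef]; simp only
            nlinarith
    have hQveq : Q t₁ v0 v1 = 0 := le_antisymm hQv0 (hQpsd v0 v1)
    -- kernel equations
    set aε := A t₁ 0 0 + ε * Real.exp (T - t₁) with haε
    set bε := A t₁ 0 1 with hbε
    set cε := A t₁ 1 1 + ε * Real.exp (T - t₁) with hcε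
    have haεnn : 0 ≤ aε := by have := hQpsd 1 0; rw [hQdef] at this; simp at this; linarith [this]
    have hcεnn : 0 ≤ cε := by have := hQpsd 0 1; rw [hQdef] at this; simp at this; linarith [this]
    have hr1 : aε * v0 + bε * v1 = 0 := by
      apply zero_of_quad_nonneg aε _ haεnn
      intro s
      have h := hQpsd (v0 + s) v1
      rw [hQdef] at h hQveq
      simp only at h hQveq
      nlinarith [h, hQveq]
    have hr2 : bε * v0 + cε * v1 = 0 := by
      apply zero_of_quad_nonneg cε _ hcεnn
      intro s
      have h := hQpsd v0 (v1 + s)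
      rw [hQdef] at h hQveq
      simp only at h hQveq
      nlinarith [h, hQveq]
    -- derivative of h t := Q t v0 v1 at t₁
    set e₁ := Real.exp (T - t₁) with he₁
    have he₁pos : 0 < e₁ := Real.exp_pos _
    have he₁le : e₁ ≤ Real.exp T := by
      apply Real.exp_le_exp.mpr; linarith [ht₁I.1]
    set D : Matrix (Fin 2) (Fin 2) ℝ := (1 / η) • (A t₁ * M * A t₁) - (γ / 2) • Sig with hDdef
    have hderexp : HasDerivAt (fun t : ℝ => ε * Real.exp (T - t) * (v0^2 + v1^2))
        (-(ε * e₁ * (v0^2 + v1^2))) t₁ := by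
      have h1 : HasDerivAt (fun t : ℝ => T - t) (-1) t₁ := by
        simpa using (hasDerivAt_id t₁).const_sub T
      have h2 := h1.exp
      have h3 := (h2.const_mul ε).mul_const (v0^2 + v1^2)
      refine h3.congr_deriv ?_
      rw [he₁]; ring
    have hder : HasDerivAt (fun t => Q t v0 v1)
        (D 0 0 * v0^2 + 2 * D 0 1 * v0 * v1 + D 1 1 * v1^2 - ε * e₁ * (v0^2 + v1^2)) t₁ := by
      have h00 := (hA t₁ ht₁I 0 0).mul_const (v0^2)
      have h01 := ((hA t₁ ht₁I 0 1).const_mul 2).mul_const (v0 * v1)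
      have h11 := (hA t₁ ht₁I 1 1).mul_const (v1^2)
      have hsum := ((h00.add h01).add h11).add hderexp
      have hfeq : (fun x => A x 0 0 * v0^2 + 2 * A x 0 1 * (v0 * v1) + A x 1 1 * v1^2 +
          ε * Real.exp (T - x) * (v0^2 + v1^2)) = fun t => Q t v0 v1 := by
        funext t; rw [hQdef]; ring
      change HasDerivAt (fun x => A x 0 0 * v0^2 + 2 * A x 0 1 * (v0 * v1) + A x 1 1 * v1^2 +
          ε * Real.exp (T - x) * (v0^2 + v1^2)) _ t₁ at hsum
      rw [hfeq] at hsum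
      refine hsum.congr_deriv ?_
      rw [hDdef]; ring
    -- compute the derivative value and show it is negative
    set d := D 0 0 * v0^2 + 2 * D 0 1 * v0 * v1 + D 1 1 * v1^2 - ε * e₁ * (v0^2 + v1^2) with hddef
    have hp10 : A t₁ 1 0 = A t₁ 0 1 := hsym t₁ ht₁I
    have hdval : d = (1/η) * ((A t₁ 0 0 * v0 + A t₁ 0 1 * v1) +
          k * (A t₁ 0 1 * v0 + A t₁ 1 1 * v1))^2
        - (γ/2) * (σ^2*v0^2 + 2*(ρ*σ*ν)*v0*v1 + ν^2*v1^2) - ε * e₁ * (v0^2 + v1^2) := by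
      rw [hddef, hDdef, hM, hSig]
      simp [Matrix.mul_apply, Fin.sum_univ_two, Matrix.smul_apply, Matrix.sub_apply, hp10]
      ring
    have heig1 : A t₁ 0 0 * v0 + A t₁ 0 1 * v1 = -(ε * e₁) * v0 := by
      rw [haε, hbε] at hr1; rw [he₁]; linarith [hr1]
    have heig2 : A t₁ 0 1 * v0 + A t₁ 1 1 * v1 = -(ε * e₁) * v1 := by
      rw [hbε, hcε] at hr2; rw [he₁]; linarith [hr2]
    have hdval2 : d = (1/η) * (ε * e₁)^2 * (v0 + k * v1)^2
        - (γ/2) * (σ^2*v0^2 + 2*(ρ*σ*ν)*v0*v1 + ν^2*v1^2) - ε * e₁ * (v0^2 + v1^2) := by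
      rw [hdval, heig1, heig2]; ring
    have hn : 0 < v0^2 + v1^2 := by
      rcases not_and_or.mp hv with h | h <;> positivity
    have hdneg : d < 0 := by
      have hsq : (v0 + k * v1)^2 ≤ (1 + k^2) * (v0^2 + v1^2) := by
        nlinarith [sq_nonneg (k * v0 - v1)]
      have hεe : ε * e₁ * (1 + k^2) < η := by
        have h1 : ε * e₁ * (1 + k^2) ≤ ε * Real.exp T * (1 + k^2) :=
          mul_le_mul_of_nonneg_right (mul_le_mul_of_nonneg_left he₁le hε.le)
            (by positivity)
        linarith
      have hηd : η * d < 0 := by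
        have hexpand : η * d = (ε * e₁)^2 * (v0 + k * v1)^2
            - η * (γ/2) * (σ^2*v0^2 + 2*(ρ*σ*ν)*v0*v1 + ν^2*v1^2)
            - η * (ε * e₁) * (v0^2 + v1^2) := by
          rw [hdval2]; field_simp
        rw [hexpand]
        have hgS : 0 ≤ η * (γ/2) * (σ^2*v0^2 + 2*(ρ*σ*ν)*v0*v1 + ν^2*v1^2) :=
          mul_nonneg (mul_nonneg (le_of_lt hη) (by linarith)) (hSigq v0 v1)
        have hmain : (ε * e₁)^2 * (v0 + k * v1)^2 < η * (ε * e₁) * (v0^2 + v1^2) := by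
          have h1 : (ε * e₁)^2 * (v0 + k * v1)^2 ≤ (ε * e₁)^2 * ((1 + k^2) * (v0^2 + v1^2)) := by
            have : (0:ℝ) ≤ (ε * e₁)^2 := sq_nonneg _
            nlinarith
          have h2 : (ε * e₁)^2 * ((1 + k^2) * (v0^2 + v1^2)) < η * (ε * e₁) * (v0^2 + v1^2) := by
            have hεe₁pos : 0 < ε * e₁ := mul_pos hε he₁pos
            have h3 := mul_lt_mul_of_pos_left hεe (mul_pos hεe₁pos hn)
            nlinarith [h3]
          linarith
        linarith
      nlinarith [hη, hηd]
    -- contradiction via the slope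
    have hslope := hasDerivAt_iff_tendsto_slope.mp hder
    have hmono : nhdsWithin t₁ (Ioi t₁) ≤ nhdsWithin t₁ {t₁}ᶜ :=
      nhdsWithin_mono _ (fun x hx => ne_of_gt hx)
    have hslope' := hslope.mono_left hmono
    have hev : ∀ᶠ t in nhdsWithin t₁ (Ioi t₁), slope (fun t => Q t v0 v1) t₁ t < 0 :=
      hslope' (Iio_mem_nhds hdneg)
    have hIoc : Ioc t₁ T ∈ nhdsWithin t₁ (Ioi t₁) := Ioc_mem_nhdsGT ht₁T
    have hne : (nhdsWithin t₁ (Ioi t₁)).NeBot := nhdsGT_neBot t₁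
    obtain ⟨t, hts, htI⟩ := (hev.and (Filter.eventually_of_mem hIoc (fun x hx => hx))).exists
    have hQt : 0 < Q t v0 v1 := hQpos t htI v0 v1 hv
    have hslope_val : slope (fun t => Q t v0 v1) t₁ t = (Q t v0 v1 - Q t₁ v0 v1) / (t - t₁) := by
      rw [slope_def_field]
    rw [hslope_val, hQveq, sub_zero] at hts
    have htpos : 0 < t - t₁ := by linarith [htI.1]
    have : 0 < Q t v0 v1 / (t - t₁) := div_pos hQt htpos
    linarith
  -- conclude PSD by letting ε → 0
  intro t ht
  rw [posSemidef_iff_dotProduct_mulVec]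
  constructor
  · show (A t)ᴴ = A t
    rw [conjTranspose_eq_transpose_of_trivial]
    exact hAsymm t ht
  · intro x
    have hexpand : star x ⬝ᵥ (A t) *ᵥ x =
        A t 0 0 * (x 0)^2 + 2 * A t 0 1 * (x 0) * (x 1) + A t 1 1 * (x 1)^2 := by
      simp [dotProduct, Matrix.mulVec, Fin.sum_univ_two, hsym t ht]
      ring
    rw [hexpand]
    by_contra hneg
    push_neg at hneg
    set c := A t 0 0 * (x 0)^2 + 2 * A t 0 1 * (x 0) * (x 1) + A t 1 1 * (x 1)^2 with hc
    have hx : ¬(x 0 = 0 ∧ x 1 = 0) := by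
      intro h
      rw [hc, h.1, h.2] at hneg
      simp at hneg
    have hn : 0 < (x 0)^2 + (x 1)^2 := by
      rcases not_and_or.mp hx with h | h <;> positivity
    have hexpT : 0 < Real.exp T := Real.exp_pos T
    set ε := min (η / (2 * (1 + k^2) * Real.exp T)) (-c / (2 * Real.exp T * ((x 0)^2 + (x 1)^2)))
      with hεdef
    have hεpos : 0 < ε := by
      apply lt_min
      · positivity
      · apply div_pos (by linarith) (by positivity)
    have hεη : ε * Real.exp T * (1 + k^2) < η := by
      have h1 : ε ≤ η / (2 * (1 + k^2) * Real.exp T) := min_le_left _ _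
      have h2 : (0:ℝ) < 1 + k^2 := by positivity
      have h3 : ε * Real.exp T * (1 + k^2) ≤
          (η / (2 * (1 + k^2) * Real.exp T)) * Real.exp T * (1 + k^2) :=
        mul_le_mul_of_nonneg_right (mul_le_mul_of_nonneg_right h1 hexpT.le) h2.le
      have h4 : (η / (2 * (1 + k^2) * Real.exp T)) * Real.exp T * (1 + k^2) = η / 2 := by
        field_simp
      rw [h4] at h3
      linarith
    obtain ⟨h1, h2⟩ := key ε hεpos hεη t ht
    have hQpos := quad_pd _ _ _ _ _ h1 h2 hx
    -- hQpos : 0 < (A t 0 0 + ε exp(T-t)) x0² + 2 A t 0 1 x0 x1 + (A t 1 1 + ε exp(T-t)) x1²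
    have hεbound : ε * Real.exp (T - t) * ((x 0)^2 + (x 1)^2) ≤ -c / 2 := by
      have hεle : ε ≤ -c / (2 * Real.exp T * ((x 0)^2 + (x 1)^2)) := min_le_right _ _
      have hexp_le : Real.exp (T - t) ≤ Real.exp T := by
        apply Real.exp_le_exp.mpr; linarith [ht.1]
      have hexp_pos : 0 < Real.exp (T - t) := Real.exp_pos _
      have h5 : ε * Real.exp (T - t) * ((x 0)^2 + (x 1)^2) ≤
          ε * Real.exp T * ((x 0)^2 + (x 1)^2) :=
        mul_le_mul_of_nonneg_right (mul_le_mul_of_nonneg_left hexp_le hεpos.le) hn.le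
      have h6 : ε * Real.exp T * ((x 0)^2 + (x 1)^2) ≤
          (-c / (2 * Real.exp T * ((x 0)^2 + (x 1)^2))) * Real.exp T * ((x 0)^2 + (x 1)^2) :=
        mul_le_mul_of_nonneg_right (mul_le_mul_of_nonneg_right hεle hexpT.le) hn.le
      have h7 : (-c / (2 * Real.exp T * ((x 0)^2 + (x 1)^2))) * Real.exp T * ((x 0)^2 + (x 1)^2)
          = -c / 2 := by field_simp
      rw [h7] at h6
      linarith
    nlinarith [hQpos, hεbound, hneg, hc]
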